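/- Let m ≥ 1 and 0 ≤ l ≤ m be integers, and let z, w ∈ ℂ with |z|² + |w|² = 1. Suppose there exist c ∈ ℂ and an integer 0 ≤ l' ≤ m such that (zζ+wω)^l·(−conj(w)ζ+conj(z)ω)^{m−l} = c·ζ^{l'}ω^{m−l'} identically as polynomials in (ζ,ω). Then zw = 0; moreover, if w = 0 then l' = l, and if z = 0 then l' = m − l. In particular, the only monomials ζ^{l'}ω^{m−l'} that lie (up to scalar) in the SU(2)-orbit of ζ^l ω^{m−l} are those with l' ∈ {l, m−l}. -/

import Mathlib

/-- If `{z,w} ∈ SU(2)` sends the monomial `ζ^l ω^{m−l}` to a scalar multiple of a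
monomial `ζ^{l'} ω^{m−l'}`, then `zw = 0`; moreover `w = 0` forces `l' = l` and `z = 0` forces
`l' = m − l`. -/
theorem stmt3 (m l l' : ℕ) (hm : 1 ≤ m) (hl : l ≤ m) (hl' : l' ≤ m)
    (z w : ℂ) (hzw : ‖z‖ ^ 2 + ‖w‖ ^ 2 = 1) (c : ℂ)
    (h : ∀ ζ ω : ℂ,
        (z * ζ + w * ω) ^ l * (-(starRingEnd ℂ w) * ζ + (starRingEnd ℂ z) * ω) ^ (m - l) =
          c * ζ ^ l' * ω ^ (m - l')) :
    z * w = 0 ∧ (w = 0 → l' = l) ∧ (z = 0 → l' = m - l) := by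
  have key : z * starRingEnd ℂ z + w * starRingEnd ℂ w = 1 := by
    rw [Complex.mul_conj, Complex.mul_conj, ← Complex.ofReal_add, ← Complex.sq_norm,
      ← Complex.sq_norm, hzw, Complex.ofReal_one]
  have hc : c ≠ 0 := by
    intro hc0
    have h1 := h (starRingEnd ℂ z - w) (starRingEnd ℂ w + z)
    rw [hc0, zero_mul, zero_mul] at h1
    have e1 : z * (starRingEnd ℂ z - w) + w * (starRingEnd ℂ w + z) = 1 := by
      linear_combination key
    have e2 : -(starRingEnd ℂ w) * (starRingEnd ℂ z - w) +
        starRingEnd ℂ z * (starRingEnd ℂ w + z) = 1 := by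
      linear_combination key
    rw [e1, e2, one_pow, one_pow] at h1
    simp at h1
  have hzw0 : z * w = 0 := by
    rcases Nat.eq_zero_or_pos l with hl0 | hlp
    · have h2 := h (starRingEnd ℂ z) (starRingEnd ℂ w)
      have e2 : -(starRingEnd ℂ w) * starRingEnd ℂ z +
          starRingEnd ℂ z * starRingEnd ℂ w = 0 := by ring
      rw [e2, zero_pow (by omega : m - l ≠ 0), mul_zero] at h2
      rcases mul_eq_zero.mp h2.symm with h3 | h3
      · rcases mul_eq_zero.mp h3 with h4 | h4
        · exact absurd h4 hc
        · have : z = 0 := by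
            have := (pow_eq_zero_iff' ).mp h4
            exact (map_eq_zero _).mp this.1
          rw [this, zero_mul]
      · have : w = 0 := by
          have := (pow_eq_zero_iff').mp h3
          exact (map_eq_zero _).mp this.1
        rw [this, mul_zero]
    · have h2 := h (-w) z
      have e1 : z * (-w) + w * z = 0 := by ring
      rw [e1, zero_pow (by omega : l ≠ 0), zero_mul] at h2
      rcases mul_eq_zero.mp h2.symm with h3 | h3
      · rcases mul_eq_zero.mp h3 with h4 | h4
        · exact absurd h4 hc
        · have : w = 0 := by
            have := (pow_eq_zero_iff').mp h4
            simpa using this.1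
          rw [this, mul_zero]
      · have : z = 0 := ((pow_eq_zero_iff').mp h3).1
        rw [this, zero_mul]
  refine ⟨hzw0, ?_, ?_⟩
  · intro hw
    subst hw
    have hA := h 1 1
    have hB := h 2 1
    simp only [map_zero, neg_zero, zero_mul, mul_one, one_mul, mul_zero, add_zero,
      zero_add, one_pow] at hA hB
    have hcc : c * 2 ^ l' = c * 2 ^ l := by
      linear_combination (2 : ℂ) ^ l * hA - hB
    have h2 : (2 : ℂ) ^ l' = 2 ^ l := mul_left_cancel₀ hc hcc
    have h3 : (2 : ℕ) ^ l' = 2 ^ l := by exact_mod_cast h2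
    exact Nat.pow_right_injective (le_refl 2) h3
  · intro hz
    subst hz
    have hA := h 1 1
    have hB := h 2 1
    simp only [map_zero, neg_zero, zero_mul, mul_one, one_mul, mul_zero, add_zero,
      zero_add, one_pow] at hA hB
    set u := -(starRingEnd ℂ w) with hu
    clear_value u
    have hcc : c * 2 ^ l' = c * 2 ^ (m - l) := by
      linear_combination (2 : ℂ) ^ (m - l) * hA - hB
    have h2 : (2 : ℂ) ^ l' = 2 ^ (m - l) := mul_left_cancel₀ hc hcc
    have h3 : (2 : ℕ) ^ l' = 2 ^ (m - l) := by exact_mod_cast h2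
    exact Nat.pow_right_injective (le_refl 2) h3
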